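/- arXiv:math/0207094 — 3 statements merged into one kernel-verified Lean document; each statement's English description precedes it below -/
import Mathlib

section
/- Let A be n×n, B = [B₁; B₂] n×r with B₂ invertible r×r, and N = [[I, -B₁B₂⁻¹],[0, I]]. Write NAN⁻¹ in blocks [[Ā₁₁, Ā₁₂],[Ā₂₁, Ā₂₂]] conformal with the partition (n-r, r). Then for every scalar s, rank [sI_n - A, B] = rank [sI_{n-r} - Ā₁₁, -Ā₁₂] + r. -/
open Matrix

private lemma finrank_prod_submodule {α β : Type*} [AddCommGroup α] [AddCommGroup β]
    [Module ℝ α] [Module ℝ β] [FiniteDimensional ℝ α] [FiniteDimensional ℝ β]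
    (S : Submodule ℝ α) (T : Submodule ℝ β) :
    Module.finrank ℝ (S.prod T) = Module.finrank ℝ S + Module.finrank ℝ T := by
  have e : (S.prod T) ≃ₗ[ℝ] S × T :=
    { toFun := fun x => (⟨x.1.1, x.2.1⟩, ⟨x.1.2, x.2.2⟩)
      invFun := fun x => ⟨(x.1.1, x.2.1), ⟨x.1.2, x.2.2⟩⟩
      map_add' := fun _ _ => rfl
      map_smul' := fun _ _ => rfl
      left_inv := fun _ => rfl
      right_inv := fun _ => rfl }
  rw [LinearEquiv.finrank_eq e, Module.finrank_prod]

private lemma range_prodMap' {α β γ δ : Type*} [AddCommGroup α] [AddCommGroup β]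
    [AddCommGroup γ] [AddCommGroup δ] [Module ℝ α] [Module ℝ β] [Module ℝ γ] [Module ℝ δ]
    (f : α →ₗ[ℝ] β) (g : γ →ₗ[ℝ] δ) :
    LinearMap.range (f.prodMap g) = (LinearMap.range f).prod (LinearMap.range g) := by
  ext ⟨x, y⟩
  simp only [LinearMap.mem_range, Submodule.mem_prod, LinearMap.prodMap_apply, Prod.ext_iff,
    Prod.exists]
  constructor
  · rintro ⟨a, b, h1, h2⟩
    exact ⟨⟨a, h1⟩, ⟨b, h2⟩⟩
  · rintro ⟨⟨a, h1⟩, ⟨b, h2⟩⟩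
    exact ⟨a, b, h1, h2⟩

private lemma rank_fromBlocks_diag {m n p q : Type*} [Fintype m] [Fintype n] [Fintype p]
    [Fintype q] [DecidableEq n] [DecidableEq q]
    (A : Matrix m n ℝ) (D : Matrix p q ℝ) :
    (fromBlocks A 0 0 D).rank = A.rank + D.rank := by
  have hcomp : (fromBlocks A 0 0 D).mulVecLin =
      ((LinearEquiv.sumArrowLequivProdArrow m p ℝ ℝ).symm.toLinearMap.comp
        ((A.mulVecLin.prodMap D.mulVecLin).comp
          (LinearEquiv.sumArrowLequivProdArrow n q ℝ ℝ).toLinearMap)) := by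
    apply LinearMap.ext
    intro w
    funext i
    cases i <;>
      simp [Matrix.mulVecLin_apply, Matrix.mulVec, dotProduct, Fintype.sum_sum_type,
        LinearEquiv.sumArrowLequivProdArrow, Equiv.sumArrowEquivProdArrow]
  rw [Matrix.rank, hcomp, LinearMap.range_comp, LinearMap.range_comp,
    LinearEquiv.range, Submodule.map_top, LinearEquiv.finrank_map_eq,
    range_prodMap', finrank_prod_submodule, Matrix.rank, Matrix.rank]

theorem zero_assign_stmt8 (m r : ℕ)
    (A : Matrix (Fin m ⊕ Fin r) (Fin m ⊕ Fin r) ℝ)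
    (B₁ : Matrix (Fin m) (Fin r) ℝ) (B₂ : Matrix (Fin r) (Fin r) ℝ)
    (hB₂ : IsUnit B₂)
    (N : Matrix (Fin m ⊕ Fin r) (Fin m ⊕ Fin r) ℝ)
    (hN : N = fromBlocks 1 (-(B₁ * B₂⁻¹)) 0 1) (s : ℝ) :
    (fromCols (s • 1 - A) (fromRows B₁ B₂)).rank =
      (fromCols (s • (1 : Matrix (Fin m) (Fin m) ℝ) - (N * A * N⁻¹).toBlocks₁₁)
        (-(N * A * N⁻¹).toBlocks₁₂)).rank + r := by
  have hB₂det : IsUnit B₂.det := (isUnit_iff_isUnit_det B₂).mp hB₂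
  have hNdet : IsUnit N.det := by
    rw [hN, det_fromBlocks_zero₂₁]
    simp
  set Ab := N * A * N⁻¹ with hAb
  set X := s • (1 : Matrix (Fin m) (Fin m) ℝ) - Ab.toBlocks₁₁ with hX
  set Y := -Ab.toBlocks₁₂ with hY
  set Z := -Ab.toBlocks₂₁ with hZ
  set W := s • (1 : Matrix (Fin r) (Fin r) ℝ) - Ab.toBlocks₂₂ with hW
  -- Step 1: multiply on the left by N
  have h1 : (fromCols (s • 1 - A) (fromRows B₁ B₂)).rank
      = (N * fromCols (s • 1 - A) (fromRows B₁ B₂)).rank :=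
    (rank_mul_eq_right_of_isUnit_det N _ hNdet).symm
  have hNB : N * fromRows B₁ B₂ = fromRows 0 B₂ := by
    rw [hN, fromBlocks_mul_fromRows]
    simp [Matrix.mul_assoc, nonsing_inv_mul B₂ hB₂det]
  have h2 : N * fromCols (s • 1 - A) (fromRows B₁ B₂)
      = fromCols (N * (s • 1 - A)) (fromRows 0 B₂) := by
    rw [mul_fromCols, hNB]
  -- Step 2: multiply on the right by fromBlocks N⁻¹ 0 0 B₂⁻¹
  have hQdet : IsUnit (fromBlocks N⁻¹ (0 : Matrix (Fin m ⊕ Fin r) (Fin r) ℝ) 0 B₂⁻¹).det := by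
    rw [det_fromBlocks_zero₂₁]
    exact ((isUnit_nonsing_inv_det N hNdet)).mul (isUnit_nonsing_inv_det B₂ hB₂det)
  have h3 : (fromCols (N * (s • 1 - A)) (fromRows 0 B₂)).rank
      = ((fromCols (N * (s • 1 - A)) (fromRows 0 B₂))
          * fromBlocks N⁻¹ 0 0 B₂⁻¹).rank :=
    (rank_mul_eq_left_of_isUnit_det _ _ hQdet).symm
  have hblocks : s • (1 : Matrix (Fin m ⊕ Fin r) (Fin m ⊕ Fin r) ℝ) - Ab
      = fromBlocks X Y Z W := by
    ext (i | i) (j | j) <;>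
      simp [hX, hY, hZ, hW, Matrix.toBlocks₁₁, Matrix.toBlocks₁₂, Matrix.toBlocks₂₁,
        Matrix.toBlocks₂₂, Matrix.one_apply]
  have hcol1 : N * (s • 1 - A) * N⁻¹ = fromBlocks X Y Z W := by
    rw [Matrix.mul_sub, Matrix.sub_mul, mul_smul_comm, Matrix.mul_one, Matrix.smul_mul,
      mul_nonsing_inv N hNdet, ← hAb, hblocks]
  have h4 : (fromCols (N * (s • 1 - A)) (fromRows 0 B₂)) * fromBlocks N⁻¹ 0 0 B₂⁻¹
      = fromCols (fromBlocks X Y Z W) (fromRows 0 1) := by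
    rw [fromCols_mul_fromBlocks, Matrix.mul_zero, Matrix.mul_zero, add_zero, zero_add,
      fromRows_mul, Matrix.zero_mul, mul_nonsing_inv B₂ hB₂det, hcol1]
  -- Step 3: multiply on the right by a unitriangular block matrix
  set C : Matrix (Fin r) (Fin m ⊕ Fin r) ℝ := fromCols (-Z) (-W) with hC
  have hTdet : IsUnit (fromBlocks (1 : Matrix (Fin m ⊕ Fin r) (Fin m ⊕ Fin r) ℝ)
      (0 : Matrix (Fin m ⊕ Fin r) (Fin r) ℝ) C 1).det := by
    rw [det_fromBlocks_zero₁₂]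
    simp
  have h5 : (fromCols (fromBlocks X Y Z W) (fromRows 0 1)).rank
      = (((fromCols (fromBlocks X Y Z W) (fromRows (0 : Matrix (Fin m) (Fin r) ℝ)
          (1 : Matrix (Fin r) (Fin r) ℝ))) * (fromBlocks 1 0 C 1 : Matrix ((Fin m ⊕ Fin r) ⊕ Fin r) ((Fin m ⊕ Fin r) ⊕ Fin r) ℝ) :
          Matrix (Fin m ⊕ Fin r) ((Fin m ⊕ Fin r) ⊕ Fin r) ℝ)).rank :=
    (rank_mul_eq_left_of_isUnit_det _ _ hTdet).symm
  have h6 : (fromCols (fromBlocks X Y Z W) (fromRows (0 : Matrix (Fin m) (Fin r) ℝ)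
        (1 : Matrix (Fin r) (Fin r) ℝ))) * (fromBlocks 1 0 C 1 : Matrix ((Fin m ⊕ Fin r) ⊕ Fin r) ((Fin m ⊕ Fin r) ⊕ Fin r) ℝ)
      = fromBlocks (fromCols X Y) 0 0 (1 : Matrix (Fin r) (Fin r) ℝ) := by
    rw [fromCols_mul_fromBlocks, Matrix.mul_one, Matrix.mul_zero, zero_add, Matrix.mul_one,
      fromRows_mul, Matrix.zero_mul, Matrix.one_mul, hC]
    ext (i | i) ((j | j) | j) <;>
      simp [fromCols_apply_inl, fromCols_apply_inr, fromRows_apply_inl, fromRows_apply_inr,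
        Matrix.fromBlocks, hX, hY, hZ, hW]
  rw [h1, h2, h3, h4, h5, h6, rank_fromBlocks_diag, Matrix.rank_one, Fintype.card_fin]
end

section
/- Let A be n×n, B = [B₁; B₂] n×r with B₂ invertible, and N = [[I, -B₁B₂⁻¹],[0, I]], with NAN⁻¹ = [[Ā₁₁, Ā₁₂],[Ā₂₁, Ā₂₂]]. If the pair (A, B) is controllable in the Hautus sense (rank [sI - A, B] = n for all complex s), then the pair (Ā₁₁, Ā₁₂) is controllable: rank [sI_{n-r} - Ā₁₁, Ā₁₂] = n - r for all complex s. -/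
open Matrix

lemma aux_rank_eq_card_iff_vecMul_injective {k n : Type*} [Fintype k] [Fintype n]
    (M : Matrix k n ℂ) :
    M.rank = Fintype.card k ↔ Function.Injective M.vecMul := by
  rw [Matrix.vecMul_injective_iff]
  constructor
  · intro h
    rw [linearIndependent_iff_card_eq_finrank_span, Set.finrank,
      ← Matrix.rank_eq_finrank_span_row, h]
  · intro h
    exact h.rank_matrix

theorem zero_assign_stmt9 (m r : ℕ)
    (A : Matrix (Fin m ⊕ Fin r) (Fin m ⊕ Fin r) ℂ)
    (B₁ : Matrix (Fin m) (Fin r) ℂ) (B₂ : Matrix (Fin r) (Fin r) ℂ)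
    (hB₂ : IsUnit B₂)
    (N : Matrix (Fin m ⊕ Fin r) (Fin m ⊕ Fin r) ℂ)
    (hN : N = fromBlocks 1 (-(B₁ * B₂⁻¹)) 0 1)
    (hctrb : ∀ s : ℂ, (fromCols (s • 1 - A) (fromRows B₁ B₂)).rank = m + r) :
    ∀ s : ℂ, (fromCols (s • (1 : Matrix (Fin m) (Fin m) ℂ) - (N * A * N⁻¹).toBlocks₁₁)
      ((N * A * N⁻¹).toBlocks₁₂)).rank = m := by
  intro s
  set Abar := N * A * N⁻¹ with hAbar
  have hdetN : IsUnit N.det := by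
    rw [hN, Matrix.det_fromBlocks_zero₂₁]; simp
  have hinvN : N⁻¹ * N = 1 := Matrix.nonsing_inv_mul N hdetN
  have hAbarN : Abar * N = N * A := by
    rw [hAbar, Matrix.mul_assoc, hinvN, Matrix.mul_one]
  have hB₂inv : B₂⁻¹ * B₂ = 1 :=
    Matrix.nonsing_inv_mul B₂ ((Matrix.isUnit_iff_isUnit_det B₂).mp hB₂)
  -- the full Hautus condition as left-nullspace triviality
  have hfull : ∀ y : Fin m ⊕ Fin r → ℂ,
      y ᵥ* fromCols (s • 1 - A) (fromRows B₁ B₂) = 0 → y = 0 := by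
    have hinj : Function.Injective (fromCols (s • 1 - A) (fromRows B₁ B₂)).vecMul := by
      rw [← aux_rank_eq_card_iff_vecMul_injective, hctrb s]
      simp
    intro y hy
    apply hinj
    show y ᵥ* _ = (0 : Fin m ⊕ Fin r → ℂ) ᵥ* _
    rw [hy, Matrix.zero_vecMul]
  -- the key left-nullspace statement for the target matrix
  have key : ∀ v : Fin m → ℂ,
      v ᵥ* fromCols (s • (1 : Matrix (Fin m) (Fin m) ℂ) - Abar.toBlocks₁₁) Abar.toBlocks₁₂ = 0 →
      v = 0 := by
    intro v hv
    rw [Matrix.vecMul_fromCols] at hv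
    have h1 : v ᵥ* (s • (1 : Matrix (Fin m) (Fin m) ℂ) - Abar.toBlocks₁₁) = 0 := by
      have := congrArg (fun f => f ∘ Sum.inl) hv
      ext i; exact congrFun this i
    have h2 : v ᵥ* Abar.toBlocks₁₂ = 0 := by
      have := congrArg (fun f => f ∘ Sum.inr) hv
      ext i; exact congrFun this i
    have hv11 : v ᵥ* Abar.toBlocks₁₁ = s • v := by
      rw [Matrix.vecMul_sub, sub_eq_zero] at h1
      rw [← h1]
      ext j
      simp [Matrix.vecMul, dotProduct, Matrix.one_apply, Finset.mul_sum, mul_comm]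
    set x : Fin m ⊕ Fin r → ℂ := Sum.elim v 0 with hx
    have hxAbar : x ᵥ* (s • (1 : Matrix (Fin m ⊕ Fin r) (Fin m ⊕ Fin r) ℂ) - Abar) = 0 := by
      rw [Matrix.vecMul_sub, sub_eq_zero, ← Matrix.fromBlocks_toBlocks Abar,
        Matrix.vecMul_fromBlocks]
      ext (i | i)
      · simp [hx, hv11, Matrix.vecMul, dotProduct, Matrix.one_apply,
          Finset.mul_sum, mul_comm]
      · simp [hx, h2, Matrix.vecMul, dotProduct, Matrix.one_apply]
    have hyA : (x ᵥ* N) ᵥ* (s • (1 : Matrix (Fin m ⊕ Fin r) (Fin m ⊕ Fin r) ℂ) - A) = 0 := by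
      have hcomm : N * (s • (1 : Matrix (Fin m ⊕ Fin r) (Fin m ⊕ Fin r) ℂ) - A)
          = (s • (1 : Matrix (Fin m ⊕ Fin r) (Fin m ⊕ Fin r) ℂ) - Abar) * N := by
        rw [Matrix.mul_sub, Matrix.sub_mul, hAbarN, Matrix.mul_smul, Matrix.smul_mul,
          Matrix.mul_one, Matrix.one_mul]
      rw [Matrix.vecMul_vecMul, hcomm, ← Matrix.vecMul_vecMul, hxAbar, Matrix.zero_vecMul]
    have hyB : (x ᵥ* N) ᵥ* fromRows B₁ B₂ = 0 := by
      have hNB : N * fromRows B₁ B₂ = fromRows 0 B₂ := by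
        rw [hN, Matrix.fromBlocks_mul_fromRows]
        simp [Matrix.neg_mul, Matrix.mul_assoc, hB₂inv]
      rw [Matrix.vecMul_vecMul, hNB, hx, Matrix.sumElim_vecMul_fromRows]
      simp
    have hy0 : x ᵥ* N = 0 := by
      apply hfull
      rw [Matrix.vecMul_fromCols, hyA, hyB]
      ext (i | i) <;> simp
    have hx0 : x = 0 := by
      have : x = (x ᵥ* N) ᵥ* N⁻¹ := by
        rw [Matrix.vecMul_vecMul, Matrix.mul_nonsing_inv N hdetN, Matrix.vecMul_one]
      rw [this, hy0, Matrix.zero_vecMul]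
    ext i
    exact congrFun hx0 (Sum.inl i)
  -- conclude
  have := (aux_rank_eq_card_iff_vecMul_injective
    (fromCols (s • (1 : Matrix (Fin m) (Fin m) ℂ) - Abar.toBlocks₁₁) Abar.toBlocks₁₂)).mpr ?_
  · rwa [Fintype.card_fin] at this
  · intro v w hvw
    have hvw' : v ᵥ* fromCols (s • (1 : Matrix (Fin m) (Fin m) ℂ) - Abar.toBlocks₁₁)
        Abar.toBlocks₁₂ = w ᵥ* fromCols (s • (1 : Matrix (Fin m) (Fin m) ℂ) - Abar.toBlocks₁₁)
        Abar.toBlocks₁₂ := hvw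
    have : (v - w) ᵥ* fromCols (s • (1 : Matrix (Fin m) (Fin m) ℂ) - Abar.toBlocks₁₁)
        Abar.toBlocks₁₂ = 0 := by
      rw [Matrix.sub_vecMul, hvw', sub_self]
    have := key _ this
    rwa [sub_eq_zero] at this
end

section
/- Let A be n×n and B n×r over ℂ with (A, B) controllable (Hautus criterion) and rank B = r, with r < n. Then for every monic polynomial ψ_a of degree n - r whose roots are disjoint from the spectrum of A, there exists an r×n matrix H of rank r such that det [[sI - A, -B],[H, 0]] = c·ψ_a(s) for some nonzero constant c, i.e., the square system (A, B, H) has exactly the invariant zeros prescribed by ψ_a. -/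
open Matrix Polynomial

private lemma hautus_step {n r : ℕ} (A : Matrix (Fin n) (Fin n) ℂ) (B : Matrix (Fin n) (Fin r) ℂ)
    (hctrb : ∀ s : ℂ, (fromCols (s • (1 : Matrix (Fin n) (Fin n) ℂ) - A) B).rank = n)
    (Z : Submodule ℂ (Fin n → ℂ)) (hZ : Z ≠ ⊤) (hBZ : ∀ w : Fin r → ℂ, B *ᵥ w ∈ Z)
    (lam : ℂ) (hlam : (lam • (1 : Matrix (Fin n) (Fin n) ℂ) - A).det ≠ 0) :
    ∃ x : Fin n → ℂ, x ∉ Z ∧ (lam • (1 : Matrix (Fin n) (Fin n) ℂ) - A) *ᵥ x ∈ Z := by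
  by_contra hcon
  push_neg at hcon
  set M : Matrix (Fin n) (Fin n) ℂ := lam • (1 : Matrix (Fin n) (Fin n) ℂ) - A with hM
  have hinv : ∀ x : Fin n → ℂ, M *ᵥ x ∈ Z → x ∈ Z := fun x hx => by
    by_contra hxZ; exact hcon x hxZ hx
  haveI : Invertible M := M.invertibleOfIsUnitDet (isUnit_iff_ne_zero.mpr hlam)
  let f : (Fin n → ℂ) ≃ₗ[ℂ] (Fin n → ℂ) := M⁻¹.toLinearEquiv' inferInstance
  have hfap : ∀ v, f v = M⁻¹ *ᵥ v := fun v => Matrix.toLin'_apply _ _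
  have hmaple : Submodule.map (f : (Fin n → ℂ) →ₗ[ℂ] (Fin n → ℂ)) Z ≤ Z := by
    rintro x ⟨z, hz, rfl⟩
    apply hinv
    have hMf : M *ᵥ ((f : (Fin n → ℂ) →ₗ[ℂ] (Fin n → ℂ)) z) = z := by
      rw [show ((f : (Fin n → ℂ) →ₗ[ℂ] (Fin n → ℂ)) z) = M⁻¹ *ᵥ z from hfap z,
        Matrix.mulVec_mulVec, Matrix.mul_nonsing_inv _ (isUnit_iff_ne_zero.mpr hlam),
        Matrix.one_mulVec]
    rw [hMf]; exact hz
  have hmapeq : Submodule.map (f : (Fin n → ℂ) →ₗ[ℂ] (Fin n → ℂ)) Z = Z :=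
    Submodule.eq_of_le_of_finrank_eq hmaple (LinearEquiv.finrank_map_eq f Z)
  -- Z is invariant under multiplication by M, hence under A
  have hMZ : ∀ x ∈ Z, M *ᵥ x ∈ Z := by
    intro x hx
    rw [← hmapeq] at hx
    obtain ⟨z, hz, rfl⟩ := hx
    have hMf : M *ᵥ ((f : (Fin n → ℂ) →ₗ[ℂ] (Fin n → ℂ)) z) = z := by
      rw [show ((f : (Fin n → ℂ) →ₗ[ℂ] (Fin n → ℂ)) z) = M⁻¹ *ᵥ z from hfap z,
        Matrix.mulVec_mulVec, Matrix.mul_nonsing_inv _ (isUnit_iff_ne_zero.mpr hlam),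
        Matrix.one_mulVec]
    rw [hMf]; exact hz
  have hAZ : ∀ x ∈ Z, A *ᵥ x ∈ Z := by
    intro x hx
    have h1 : A *ᵥ x = lam • x - M *ᵥ x := by
      rw [hM, Matrix.sub_mulVec, Matrix.smul_mulVec, Matrix.one_mulVec]
      abel
    rw [h1]
    exact Z.sub_mem (Z.smul_mem _ hx) (hMZ x hx)
  have hAZ' : Z ≤ Z.comap A.mulVecLin := fun x hx => by
    simpa [Matrix.mulVecLin] using hAZ x hx
  -- pass to the quotient
  haveI : Nontrivial ((Fin n → ℂ) ⧸ Z) :=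
    Submodule.Quotient.nontrivial_iff.mpr hZ
  let Abar : ((Fin n → ℂ) ⧸ Z) →ₗ[ℂ] ((Fin n → ℂ) ⧸ Z) := Z.mapQ Z A.mulVecLin hAZ'
  obtain ⟨μ, hμ⟩ := Module.End.exists_eigenvalue Abar
  obtain ⟨v, hv⟩ := hμ.exists_hasEigenvector
  let g : ((Fin n → ℂ) ⧸ Z) →ₗ[ℂ] ((Fin n → ℂ) ⧸ Z) := μ • LinearMap.id - Abar
  have hgv : g v = 0 := by
    simp only [g, LinearMap.sub_apply, LinearMap.smul_apply, LinearMap.id_apply]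
    rw [hv.apply_eq_smul]; abel
  have hgni : ¬ Function.Injective g := by
    intro h
    exact hv.2 (h (by rw [hgv, map_zero]))
  have hgns : ¬ Function.Surjective g := fun h => hgni ((LinearMap.injective_iff_surjective).mpr h)
  have hrg : LinearMap.range g ≠ ⊤ := fun h => hgns (LinearMap.range_eq_top.mp h)
  -- the bad subspace
  set W : Submodule ℂ (Fin n → ℂ) := (LinearMap.range g).comap Z.mkQ with hW
  have hWne : W ≠ ⊤ := by
    intro h
    apply hrg
    have := congrArg (Submodule.map Z.mkQ) h
    rwa [Submodule.map_comap_eq_of_surjective Z.mkQ_surjective, Submodule.map_top,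
      Submodule.range_mkQ] at this
  have hle : LinearMap.range (fromCols (μ • (1 : Matrix (Fin n) (Fin n) ℂ) - A) B).mulVecLin ≤ W := by
    rintro w ⟨z, rfl⟩
    have hz : z = Sum.elim (z ∘ Sum.inl) (z ∘ Sum.inr) := by
      ext (i | i) <;> rfl
    have hmv : (fromCols (μ • (1 : Matrix (Fin n) (Fin n) ℂ) - A) B).mulVecLin z
        = (μ • (1 : Matrix (Fin n) (Fin n) ℂ) - A) *ᵥ (z ∘ Sum.inl) + B *ᵥ (z ∘ Sum.inr) := by
      have h0 := Matrix.fromCols_mulVec_sumElim (μ • (1 : Matrix (Fin n) (Fin n) ℂ) - A) B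
        (z ∘ Sum.inl) (z ∘ Sum.inr)
      rw [← hz] at h0
      rw [Matrix.mulVecLin_apply, h0]
    rw [hmv, hW]
    simp only [Submodule.mem_comap, map_add]
    have hB0 : Z.mkQ (B *ᵥ (z ∘ Sum.inr)) = 0 := by
      rw [Submodule.mkQ_apply, Submodule.Quotient.mk_eq_zero]
      exact hBZ _
    rw [hB0, add_zero]
    refine ⟨Z.mkQ (z ∘ Sum.inl), ?_⟩
    have h1 : (μ • (1 : Matrix (Fin n) (Fin n) ℂ) - A) *ᵥ (z ∘ Sum.inl)
        = μ • (z ∘ Sum.inl) - A *ᵥ (z ∘ Sum.inl) := by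
      rw [Matrix.sub_mulVec, Matrix.smul_mulVec, Matrix.one_mulVec]
    rw [h1, map_sub, LinearMap.map_smul]
    have h2 : Z.mkQ (A *ᵥ (z ∘ Sum.inl)) = Abar (Z.mkQ (z ∘ Sum.inl)) := by
      rw [Submodule.mkQ_apply, Submodule.mkQ_apply, Submodule.mapQ_apply,
        Matrix.mulVecLin_apply]
    have h3 : g (Z.mkQ (z ∘ Sum.inl)) = μ • Z.mkQ (z ∘ Sum.inl) - Abar (Z.mkQ (z ∘ Sum.inl)) := rfl
    rw [h3, h2]
  have hfinW : Module.finrank ℂ W < n := by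
    have h1 : W < ⊤ := lt_top_iff_ne_top.mpr hWne
    have := Submodule.finrank_lt (K := ℂ) (V := Fin n → ℂ) h1.ne
    rwa [Module.finrank_fintype_fun_eq_card, Fintype.card_fin] at this
  have hrank := hctrb μ
  rw [Matrix.rank] at hrank
  have : Module.finrank ℂ
      (LinearMap.range (fromCols (μ • (1 : Matrix (Fin n) (Fin n) ℂ) - A) B).mulVecLin)
      ≤ Module.finrank ℂ W := Submodule.finrank_mono hle
  omega
private lemma zero_assign_build {n r : ℕ} (A : Matrix (Fin n) (Fin n) ℂ)
    (B : Matrix (Fin n) (Fin r) ℂ)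
    (hctrb : ∀ s : ℂ, (fromCols (s • (1 : Matrix (Fin n) (Fin n) ℂ) - A) B).rank = n)
    (hBli : LinearIndependent ℂ (fun i : Fin r => fun a => B a i))
    {m : ℕ} (hmrn : r + m = n) (lam : Fin m → ℂ)
    (hlam : ∀ j, (lam j • (1 : Matrix (Fin n) (Fin n) ℂ) - A).det ≠ 0) :
    ∀ k, ∀ (hk : k ≤ m), ∃ (y : Fin (r + k) → (Fin n → ℂ)) (u : Fin k → (Fin r → ℂ))
      (L : Fin k → Fin k → ℂ),
      LinearIndependent ℂ y ∧
      (∀ i : Fin r, y (Fin.castAdd k i) = fun a => B a i) ∧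
      (∀ j : Fin k, A *ᵥ y (Fin.natAdd r j) + B *ᵥ u j
        = ∑ i : Fin k, L i j • y (Fin.natAdd r i)) ∧
      (∀ i j : Fin k, (j : ℕ) < (i : ℕ) → L i j = 0) ∧
      (∀ j : Fin k, L j j = lam (Fin.castLE hk j)) := by
  intro k
  induction k with
  | zero =>
    intro hk
    refine ⟨fun i => fun a => B a (Fin.cast (Nat.add_zero r) i), fun j => Fin.elim0 j,
      fun i => Fin.elim0 i, ?_, ?_, fun j => Fin.elim0 j, fun i => Fin.elim0 i,
      fun j => Fin.elim0 j⟩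
    · exact hBli.comp _ (fun a b hab => by
        simpa using congrArg (Fin.cast (Nat.add_zero r).symm) hab)
    · intro i; rfl
  | succ k ih =>
    intro hk
    obtain ⟨y, u, L, hli, hyB, heq, htri, hdiag⟩ := ih (Nat.le_of_succ_le hk)
    set Z : Submodule ℂ (Fin n → ℂ) := Submodule.span ℂ (Set.range y) with hZdef
    have hZfin : Module.finrank ℂ Z = r + k := by
      rw [hZdef, finrank_span_eq_card hli, Fintype.card_fin]
    have hZne : Z ≠ ⊤ := by
      intro h
      rw [h, finrank_top, Module.finrank_fintype_fun_eq_card, Fintype.card_fin] at hZfin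
      omega
    have hBZ : ∀ w : Fin r → ℂ, B *ᵥ w ∈ Z := by
      intro w
      have hBw : B *ᵥ w = ∑ i : Fin r, w i • y (Fin.castAdd k i) := by
        funext a
        rw [Finset.sum_apply]
        simp only [hyB, Pi.smul_apply, smul_eq_mul]
        simp [Matrix.mulVec, dotProduct, mul_comm]
      rw [hBw]
      exact Submodule.sum_mem _ fun i _ =>
        Submodule.smul_mem _ _ (Submodule.subset_span (Set.mem_range_self _))
    obtain ⟨x', hx'Z, hMx'⟩ := hautus_step A B hctrb Z hZne hBZ (lam ⟨k, hk⟩)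
      (hlam ⟨k, hk⟩)
    rw [hZdef, Submodule.mem_span_range_iff_exists_fun] at hMx'
    obtain ⟨c, hc⟩ := hMx'
    have hAx' : A *ᵥ x' = lam ⟨k, hk⟩ • x'
        - ((∑ i : Fin r, c (Fin.castAdd k i) • y (Fin.castAdd k i))
          + ∑ i : Fin k, c (Fin.natAdd r i) • y (Fin.natAdd r i)) := by
      rw [← Fin.sum_univ_add (fun i : Fin (r + k) => c i • y i), hc,
        Matrix.sub_mulVec, Matrix.smul_mulVec, Matrix.one_mulVec]
      abel
    have hsx : ∀ i : Fin (k+1), (Fin.snoc y x' : Fin (r+(k+1)) → (Fin n → ℂ)) (Fin.natAdd r i)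
        = if h : (i : ℕ) < k then y (Fin.natAdd r ⟨i, h⟩) else x' := by
      intro i
      by_cases h : (i : ℕ) < k
      · rw [dif_pos h]
        have he : (Fin.natAdd r i : Fin (r + (k+1))) = Fin.castSucc (Fin.natAdd r ⟨i, h⟩) := by
          simp [Fin.ext_iff]
        rw [he, Fin.snoc_castSucc]
      · rw [dif_neg h]
        have hik : (i : ℕ) = k := by have := i.2; omega
        have he : (Fin.natAdd r i : Fin (r + (k+1))) = Fin.last (r + k) := by
          simp [Fin.ext_iff, hik]
        rw [he]
        exact Fin.snoc_last _ _
    have hsu : ∀ j : Fin (k+1),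
        (Fin.snoc u (fun i => c (Fin.castAdd k i)) : Fin (k+1) → (Fin r → ℂ)) j
        = if h : (j : ℕ) < k then u ⟨j, h⟩ else (fun i => c (Fin.castAdd k i)) := by
      intro j
      by_cases h : (j : ℕ) < k
      · rw [dif_pos h]
        have he : j = Fin.castSucc (⟨j, h⟩ : Fin k) := by simp [Fin.ext_iff]
        conv_lhs => rw [he]
        rw [Fin.snoc_castSucc]
      · rw [dif_neg h]
        have hik : (j : ℕ) = k := by have := j.2; omega
        have he : j = Fin.last k := by simp [Fin.ext_iff, hik]
        conv_lhs => rw [he]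
        exact Fin.snoc_last _ _
    refine ⟨Fin.snoc y x', Fin.snoc u (fun i => c (Fin.castAdd k i)),
      fun i j => if hj : (j : ℕ) < k then
          (if hi : (i : ℕ) < k then L ⟨i, hi⟩ ⟨j, hj⟩ else 0)
        else (if hi : (i : ℕ) < k then - c (Fin.natAdd r ⟨i, hi⟩) else lam ⟨k, hk⟩),
      ?_, ?_, ?_, ?_, ?_⟩
    · exact linearIndependent_fin_snoc.mpr ⟨hli, hx'Z⟩
    · intro i
      have h1 : (Fin.castAdd (k+1) i : Fin (r + (k+1))) = Fin.castSucc (Fin.castAdd k i) := by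
        simp [Fin.ext_iff]
      rw [h1, Fin.snoc_castSucc]
      exact hyB i
    · intro j
      beta_reduce
      rw [hsx j, hsu j, Fin.sum_univ_castSucc]
      have hterm : ∀ i : Fin k,
          (if hj : (j : ℕ) < k then
            (if hi : ((Fin.castSucc i : Fin (k+1)) : ℕ) < k then L ⟨_, hi⟩ ⟨_, hj⟩ else 0)
          else (if hi : ((Fin.castSucc i : Fin (k+1)) : ℕ) < k then
            - c (Fin.natAdd r ⟨_, hi⟩) else lam ⟨k, hk⟩))
            • (Fin.snoc y x' : Fin (r+(k+1)) → (Fin n → ℂ)) (Fin.natAdd r (Fin.castSucc i))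
          = (if hj : (j : ℕ) < k then L i ⟨j, hj⟩ else - c (Fin.natAdd r i)) • y (Fin.natAdd r i) := by
        intro i
        have hi' : ((Fin.castSucc i : Fin (k+1)) : ℕ) < k := i.2
        have hy' : (Fin.snoc y x' : Fin (r+(k+1)) → (Fin n → ℂ)) (Fin.natAdd r (Fin.castSucc i))
            = y (Fin.natAdd r i) := by
          rw [hsx (Fin.castSucc i), dif_pos hi']
          have hieq : (⟨((Fin.castSucc i : Fin (k+1)) : ℕ), hi'⟩ : Fin k) = i :=
            Fin.ext (by simp)
          rw [hieq]
        rw [hy']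
        congr 1
        by_cases hj : (j : ℕ) < k
        · rw [dif_pos hj, dif_pos hi', dif_pos hj]
          have hieq : (⟨((Fin.castSucc i : Fin (k+1)) : ℕ), hi'⟩ : Fin k) = i :=
            Fin.ext (by simp)
          rw [hieq]
        · rw [dif_neg hj, dif_pos hi', dif_neg hj]
          have hieq : (⟨((Fin.castSucc i : Fin (k+1)) : ℕ), hi'⟩ : Fin k) = i :=
            Fin.ext (by simp)
          rw [hieq]
      have hlast : (Fin.snoc y x' : Fin (r+(k+1)) → (Fin n → ℂ)) (Fin.natAdd r (Fin.last k))
          = x' := by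
        rw [hsx (Fin.last k)]
        simp only [Fin.val_last]
        rw [dif_neg (lt_irrefl k)]
      simp only [hterm, hlast]
      by_cases hj : (j : ℕ) < k
      · rw [dif_pos hj]
        have hLlast : (if hj' : (j : ℕ) < k then
              (if hi : ((Fin.last k : Fin (k+1)) : ℕ) < k then L ⟨_, hi⟩ ⟨_, hj'⟩ else 0)
            else (if hi : ((Fin.last k : Fin (k+1)) : ℕ) < k then
              - c (Fin.natAdd r ⟨_, hi⟩) else lam ⟨k, hk⟩)) = 0 := by
          simp only [Fin.val_last]
          rw [dif_pos hj, dif_neg (lt_irrefl k)]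
        rw [hLlast, zero_smul, add_zero]
        have := heq ⟨j, hj⟩
        simp only [dif_pos hj] at this ⊢
        convert this using 2
      · rw [dif_neg hj]
        have hLlast : (if hj' : (j : ℕ) < k then
              (if hi : ((Fin.last k : Fin (k+1)) : ℕ) < k then L ⟨_, hi⟩ ⟨_, hj'⟩ else 0)
            else (if hi : ((Fin.last k : Fin (k+1)) : ℕ) < k then
              - c (Fin.natAdd r ⟨_, hi⟩) else lam ⟨k, hk⟩)) = lam ⟨k, hk⟩ := by
          simp only [Fin.val_last]
          rw [dif_neg hj, dif_neg (lt_irrefl k)]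
        rw [hLlast]
        simp only [dif_neg hj]
        have hBu : B *ᵥ (fun i => c (Fin.castAdd k i))
            = ∑ i : Fin r, c (Fin.castAdd k i) • y (Fin.castAdd k i) := by
          funext a
          rw [Finset.sum_apply]
          simp only [hyB, Pi.smul_apply, smul_eq_mul]
          simp [Matrix.mulVec, dotProduct, mul_comm]
        rw [hAx', hBu]
        have hns : ∀ i : Fin k, (- c (Fin.natAdd r i)) • y (Fin.natAdd r i)
            = - (c (Fin.natAdd r i) • y (Fin.natAdd r i)) := fun i => by rw [neg_smul]
        simp only [hns]
        rw [Finset.sum_neg_distrib]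
        abel
    · intro i j hij
      beta_reduce
      by_cases hj : (j : ℕ) < k
      · by_cases hi : (i : ℕ) < k
        · rw [dif_pos hj, dif_pos hi]
          exact htri _ _ hij
        · rw [dif_pos hj, dif_neg hi]
      · exfalso
        have h1 : (i : ℕ) < k + 1 := i.2
        omega
    · intro j
      beta_reduce
      by_cases hj : (j : ℕ) < k
      · rw [dif_pos hj, dif_pos hj, hdiag ⟨j, hj⟩]
        congr 1
      · rw [dif_neg hj, dif_neg hj]
        have hjk : (j : ℕ) = k := by have := j.2; omega
        congr 1
        exact Fin.ext hjk.symm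

section helpers

variable {n m r : ℕ}

private lemma submatrix_mul_right {ρ κ : Type*} [Fintype κ] (M : Matrix ρ κ ℂ)
    (N : Matrix κ (Fin m ⊕ Fin r) ℂ) (e : Fin m ⊕ Fin r ≃ Fin n) :
    M * (N.submatrix id e.symm) = (M * N).submatrix id e.symm := by
  ext i j
  simp [Matrix.mul_apply]

private lemma submatrix_mul_split {ρ : Type*} (M : Matrix ρ (Fin m ⊕ Fin r) ℂ)
    (N : Matrix (Fin m ⊕ Fin r) (Fin m ⊕ Fin r) ℂ) (e : Fin m ⊕ Fin r ≃ Fin n) :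
    (M * N).submatrix id e.symm
      = (M.submatrix id e.symm) * (N.submatrix e.symm e.symm) := by
  ext i j
  rw [Matrix.submatrix_apply, Matrix.mul_apply, Matrix.mul_apply]
  exact Fintype.sum_equiv e (fun q => M i q * N q (e.symm j))
    (fun p => M.submatrix id e.symm i p * N.submatrix e.symm e.symm p j)
    (fun q => by simp)

end helpers

theorem zero_assign_stmt17 (n r : ℕ) (hrn : r < n)
    (A : Matrix (Fin n) (Fin n) ℂ) (B : Matrix (Fin n) (Fin r) ℂ)
    (hB : B.rank = r)
    (hctrb : ∀ s : ℂ, (fromCols (s • (1 : Matrix (Fin n) (Fin n) ℂ) - A) B).rank = n)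
    (ψ : Polynomial ℂ) (hmonic : ψ.Monic) (hdeg : ψ.natDegree = n - r)
    (hroots : ∀ s : ℂ, ψ.IsRoot s → (s • (1 : Matrix (Fin n) (Fin n) ℂ) - A).det ≠ 0) :
    ∃ (H : Matrix (Fin r) (Fin n) ℂ) (c : ℂ), c ≠ 0 ∧ H.rank = r ∧
      ∀ s : ℂ, (fromBlocks (s • (1 : Matrix (Fin n) (Fin n) ℂ) - A) (-B) H 0).det =
        c * ψ.eval s := by
  classical
  set m := n - r with hm
  have hmn : m + r = n := by omega
  have hrm : r + m = n := by omega
  have hψ0 : ψ ≠ 0 := hmonic.ne_zero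
  -- the roots of ψ as a function on Fin m
  have hcard : Multiset.card ψ.roots = ψ.natDegree :=
    (Polynomial.splits_iff_card_roots).mp (IsAlgClosed.splits ψ)
  set l : List ℂ := ψ.roots.toList with hl
  have hlen : l.length = m := by
    rw [hl, Multiset.length_toList, hcard, hdeg]
  set lam : Fin m → ℂ := fun j => l.get (Fin.cast hlen.symm j) with hlam
  have hlammem : ∀ j, ψ.IsRoot (lam j) := by
    intro j
    have h1 : lam j ∈ l := by
      rw [hlam]
      exact List.get_mem l _
    have h2 : lam j ∈ ψ.roots := by rwa [← Multiset.mem_toList]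
    exact (Polynomial.mem_roots'.mp h2).2
  have hlamdet : ∀ j, ((lam j) • (1 : Matrix (Fin n) (Fin n) ℂ) - A).det ≠ 0 :=
    fun j => hroots _ (hlammem j)
  -- columns of B are linearly independent
  have hBinj : Function.Injective B.mulVecLin := by
    have h1 := B.mulVecLin.finrank_range_add_finrank_ker
    rw [show Module.finrank ℂ (LinearMap.range B.mulVecLin) = r from by
        rw [← Matrix.rank, hB],
      Module.finrank_fintype_fun_eq_card, Fintype.card_fin] at h1
    have h2 : Module.finrank ℂ (LinearMap.ker B.mulVecLin) = 0 := by omega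
    rw [← LinearMap.ker_eq_bot]
    exact Submodule.finrank_eq_zero.mp h2
  have hBli : LinearIndependent ℂ (fun i : Fin r => fun a => B a i) := by
    rw [Fintype.linearIndependent_iff]
    intro g hg i
    have h1 : B.mulVecLin g = 0 := by
      rw [Matrix.mulVecLin_apply]
      funext a
      have := congrFun hg a
      simpa [Matrix.mulVec, dotProduct, mul_comm] using this
    have h2 : g = 0 := by
      apply hBinj
      rw [h1, map_zero]
    exact congrFun h2 i
  -- the inductive construction
  obtain ⟨y, u, L, hli, hyB, heqv, htri, hdiag⟩ :=
    zero_assign_build A B hctrb hBli hrm lam hlamdet m le_rfl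
  -- matrices
  set X : Matrix (Fin n) (Fin m) ℂ := fun a j => y (Fin.natAdd r j) a with hX
  set U : Matrix (Fin r) (Fin m) ℂ := fun i j => u j i with hU
  have hAXB : A * X + B * U = X * (Matrix.of L) := by
    ext a j
    have h1 := congrFun (heqv j) a
    simp only [Pi.add_apply, Matrix.mulVec, dotProduct] at h1
    rw [Matrix.add_apply, Matrix.mul_apply, Matrix.mul_apply, Matrix.mul_apply]
    rw [Finset.sum_apply] at h1
    simpa [hX, hU, Matrix.of_apply, mul_comm] using h1
  set Lm : Matrix (Fin m) (Fin m) ℂ := Matrix.of L with hLm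
  -- the change-of-basis matrix
  set e : Fin m ⊕ Fin r ≃ Fin n := finSumFinEquiv.trans (finCongr hmn) with he
  set Cm : Matrix (Fin n) (Fin n) ℂ := (fromCols X B).submatrix id e.symm with hCm
  set φ : Fin n ≃ Fin (r + m) :=
    e.symm.trans ((Equiv.sumComm (Fin m) (Fin r)).trans finSumFinEquiv) with hφ
  have hCcol : ∀ (a : Fin n) (q : Fin n), Cm a q = y (φ q) a := by
    intro a q
    have hφq : φ q = finSumFinEquiv ((Equiv.sumComm (Fin m) (Fin r)) (e.symm q)) := rfl
    rw [hCm, Matrix.submatrix_apply, hφq]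
    cases hq : e.symm q with
    | inl j =>
      rw [Matrix.fromCols_apply_inl]
      simp only [Equiv.sumComm_apply, Sum.swap_inl, finSumFinEquiv_apply_right]
      rfl
    | inr i =>
      rw [Matrix.fromCols_apply_inr]
      simp only [Equiv.sumComm_apply, Sum.swap_inr, finSumFinEquiv_apply_left]
      rw [hyB i]
      rfl
  have hli2 : LinearIndependent ℂ (y ∘ φ) := hli.comp φ φ.injective
  haveI : Nonempty (Fin n) := ⟨⟨0, by omega⟩⟩
  have hcardn : Fintype.card (Fin n) = Module.finrank ℂ (Fin n → ℂ) := by simp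
  set bas : Module.Basis (Fin n) ℂ (Fin n → ℂ) :=
    basisOfLinearIndependentOfCardEqFinrank hli2 hcardn with hbasdef
  have hbas : ⇑bas = y ∘ φ := coe_basisOfLinearIndependentOfCardEqFinrank _ _
  have hCb : Cm = (Pi.basisFun ℂ (Fin n)).toMatrix ⇑bas := by
    ext a q
    rw [Module.Basis.toMatrix_apply, Pi.basisFun_repr, hbas]
    exact hCcol a q
  haveI hCinv : Invertible Cm := by
    rw [hCb]
    exact (Pi.basisFun ℂ (Fin n)).invertibleToMatrix bas
  set D : Matrix (Fin n) (Fin n) ℂ := ⅟Cm with hD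
  have hDC : D * Cm = 1 := invOf_mul_self Cm
  set Hm : Matrix (Fin r) (Fin n) ℂ :=
    D.submatrix (fun i : Fin r => e (Sum.inr i)) id with hHm
  have hCinr : ∀ (a : Fin n) (i : Fin r), Cm a (e (Sum.inr i)) = B a i := by
    intro a i
    rw [hCm, Matrix.submatrix_apply, Equiv.symm_apply_apply, Matrix.fromCols_apply_inr]
    rfl
  have hCinl : ∀ (a : Fin n) (j : Fin m), Cm a (e (Sum.inl j)) = X a j := by
    intro a j
    rw [hCm, Matrix.submatrix_apply, Equiv.symm_apply_apply, Matrix.fromCols_apply_inl]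
    rfl
  have hHB : Hm * B = 1 := by
    ext i i'
    have h1 : (Hm * B) i i' = (D * Cm) (e (Sum.inr i)) (e (Sum.inr i')) := by
      rw [Matrix.mul_apply, Matrix.mul_apply]
      exact Finset.sum_congr rfl fun a _ => by rw [hHm, Matrix.submatrix_apply, hCinr, id]
    rw [h1, hDC, Matrix.one_apply, Matrix.one_apply]
    by_cases h : i = i'
    · subst h; simp
    · rw [if_neg h, if_neg fun hc => h (Sum.inr_injective (e.injective hc))]
  have hHX : Hm * X = 0 := by
    ext i j
    have h1 : (Hm * X) i j = (D * Cm) (e (Sum.inr i)) (e (Sum.inl j)) := by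
      rw [Matrix.mul_apply, Matrix.mul_apply]
      exact Finset.sum_congr rfl fun a _ => by rw [hHm, Matrix.submatrix_apply, hCinl, id]
    rw [h1, hDC, Matrix.one_apply, if_neg fun hc => Sum.inr_ne_inl (e.injective hc),
      Matrix.zero_apply]
  have hrankH : Hm.rank = r := by
    refine le_antisymm ?_ ?_
    · simpa using Hm.rank_le_card_height
    · have h1 := Matrix.rank_mul_le_left Hm B
      rw [hHB, Matrix.rank_one, Fintype.card_fin] at h1
      exact h1
  -- the auxiliary invertible matrix Q
  set Q : Matrix (Fin n ⊕ Fin r) (Fin n ⊕ Fin r) ℂ :=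
    fromBlocks ((fromCols X (0 : Matrix (Fin n) (Fin r) ℂ)).submatrix id e.symm) B
      ((fromCols U (1 : Matrix (Fin r) (Fin r) ℂ)).submatrix id e.symm) 0 with hQ
  set cB : ℂ := ((fromCols X (-B)).submatrix id e.symm).det with hcB
  have hcBval : cB = Cm.det * (-1 : ℂ) ^ r := by
    have h1 : fromCols X (-B) = fromCols X B
        * fromBlocks (1 : Matrix (Fin m) (Fin m) ℂ) 0 0 (-1 : Matrix (Fin r) (Fin r) ℂ) := by
      rw [fromCols_mul_fromBlocks]
      congr 1 <;> simp
    rw [hcB, h1, submatrix_mul_split _ _ e, Matrix.det_mul, ← hCm,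
      Matrix.det_submatrix_equiv_self, Matrix.det_fromBlocks_zero₂₁, Matrix.det_one, one_mul,
      Matrix.det_neg, Matrix.det_one, mul_one, Fintype.card_fin]
  have hcBne : cB ≠ 0 := by
    rw [hcBval]
    exact mul_ne_zero (Matrix.isUnit_det_of_invertible Cm).ne_zero
      (pow_ne_zero _ (by norm_num))
  -- product of roots equals evaluation
  have hprodeval : ∀ s : ℂ, ∏ j : Fin m, (s - lam j) = ψ.eval s := by
    intro s
    have h1 : ψ = (ψ.roots.map fun a => Polynomial.X - Polynomial.C a).prod :=
      (prod_multiset_X_sub_C_of_monic_of_roots_card_eq hmonic hcard).symm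
    conv_rhs => rw [h1]
    rw [eval_multiset_prod, Multiset.map_map]
    have h2 : ((eval s) ∘ fun a => Polynomial.X - Polynomial.C a) = fun a => s - a := by
      funext a; simp
    rw [h2, ← Multiset.coe_toList ψ.roots, Multiset.map_coe, Multiset.prod_coe, ← hl,
      ← List.ofFn_getElem_eq_map l (fun a => s - a), List.prod_ofFn]
    exact Fintype.prod_equiv (finCongr hlen.symm)
      (fun j : Fin m => s - lam j) (fun i : Fin l.length => s - l.get i)
      (fun j => rfl)
  -- the key determinant identity
  have key : ∀ s : ℂ,
      (fromBlocks (s • (1 : Matrix (Fin n) (Fin n) ℂ) - A) (-B) Hm 0).det * Q.det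
        = cB * ψ.eval s := by
    intro s
    set Ms : Matrix (Fin n) (Fin n) ℂ := s • 1 - A with hMs
    set K : Matrix (Fin m) (Fin m) ℂ := s • 1 - Lm with hK
    have hXK : Ms * X + (-B) * U = X * K := by
      rw [hMs, hK, Matrix.sub_mul, Matrix.smul_mul, Matrix.one_mul, Matrix.mul_sub,
        Matrix.mul_smul, Matrix.mul_one, Matrix.neg_mul, ← hAXB]
      abel
    have hPQ : (fromBlocks Ms (-B) Hm 0) * Q
        = fromBlocks ((fromCols (X * K) (-B)).submatrix id e.symm) (Ms * B) 0 1 := by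
      rw [hQ, Matrix.fromBlocks_multiply]
      refine Matrix.ext fun p q => ?_
      have hcols : Ms * fromCols X (0 : Matrix (Fin n) (Fin r) ℂ)
          + (-B) * fromCols U (1 : Matrix (Fin r) (Fin r) ℂ)
          = fromCols (X * K) (-B) := by
        rw [Matrix.mul_fromCols, Matrix.mul_fromCols, Matrix.mul_zero, Matrix.mul_one]
        ext a (j | i)
        · rw [Matrix.add_apply, Matrix.fromCols_apply_inl, Matrix.fromCols_apply_inl,
            Matrix.fromCols_apply_inl, ← hXK, Matrix.add_apply]
        · rw [Matrix.add_apply, Matrix.fromCols_apply_inr, Matrix.fromCols_apply_inr,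
            Matrix.fromCols_apply_inr, Matrix.zero_apply, zero_add]
      have hTL : Ms * (fromCols X (0 : Matrix (Fin n) (Fin r) ℂ)).submatrix id e.symm
          + (-B) * (fromCols U (1 : Matrix (Fin r) (Fin r) ℂ)).submatrix id e.symm
          = (fromCols (X * K) (-B)).submatrix id e.symm := by
        rw [submatrix_mul_right _ _ e, submatrix_mul_right _ _ e, ← hcols]
        ext a b
        simp [Matrix.submatrix_apply]
      have hBL : Hm * (fromCols X (0 : Matrix (Fin n) (Fin r) ℂ)).submatrix id e.symm
          + (0 : Matrix (Fin r) (Fin r) ℂ)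
            * (fromCols U (1 : Matrix (Fin r) (Fin r) ℂ)).submatrix id e.symm = 0 := by
        rw [Matrix.zero_mul, add_zero, submatrix_mul_right _ _ e, Matrix.mul_fromCols,
          hHX, Matrix.mul_zero, Matrix.fromCols_zero]
        ext a b
        simp [Matrix.submatrix_apply]
      rcases p with p | p <;> rcases q with q | q
      · rw [Matrix.fromBlocks_apply₁₁, Matrix.fromBlocks_apply₁₁, hTL]
      · rw [Matrix.fromBlocks_apply₁₂, Matrix.fromBlocks_apply₁₂, Matrix.mul_zero, add_zero]
      · rw [Matrix.fromBlocks_apply₂₁, Matrix.fromBlocks_apply₂₁, hBL]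
      · rw [Matrix.fromBlocks_apply₂₂, Matrix.fromBlocks_apply₂₂, hHB, Matrix.mul_zero,
          add_zero]
    have hdetK : K.det = ∏ j : Fin m, (s - lam j) := by
      have hKtri : K.BlockTriangular id := by
        intro i j hij
        have hne : i ≠ j := fun hc => by rw [hc] at hij; exact lt_irrefl _ hij
        rw [hK, Matrix.sub_apply, Matrix.smul_apply, Matrix.one_apply_ne hne, hLm,
          Matrix.of_apply, htri i j hij, smul_zero, sub_zero]
      rw [Matrix.det_of_upperTriangular hKtri]
      refine Finset.prod_congr rfl fun j _ => ?_
      rw [hK, Matrix.sub_apply, Matrix.smul_apply, Matrix.one_apply_eq, hLm, Matrix.of_apply,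
        hdiag j, smul_eq_mul, mul_one]
      rfl
    have hdetPQ : ((fromBlocks Ms (-B) Hm 0) * Q).det = cB * ∏ j : Fin m, (s - lam j) := by
      rw [hPQ, Matrix.det_fromBlocks_zero₂₁, Matrix.det_one, mul_one]
      have h4 : fromCols (X * K) (-B) = fromCols X (-B)
          * fromBlocks K 0 0 (1 : Matrix (Fin r) (Fin r) ℂ) := by
        rw [fromCols_mul_fromBlocks]
        congr 1 <;> simp
      rw [h4, submatrix_mul_split _ _ e, Matrix.det_mul, Matrix.det_submatrix_equiv_self,
        ← hcB, Matrix.det_fromBlocks_zero₂₁, Matrix.det_one, mul_one, hdetK]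
    rw [← Matrix.det_mul, hdetPQ, hprodeval s]
  -- Q has nonzero determinant
  obtain ⟨s₀, hs₀⟩ : ∃ s₀ : ℂ, ψ.eval s₀ ≠ 0 := by
    apply ψ.exists_eval_ne_zero_of_natDegree_lt_card hψ0
    exact lt_of_lt_of_le (Cardinal.nat_lt_aleph0 _) (Cardinal.aleph0_le_mk ℂ)
  have hQdet : Q.det ≠ 0 := by
    intro h0
    have hk := key s₀
    rw [h0, mul_zero] at hk
    exact (mul_ne_zero hcBne hs₀) hk.symm
  refine ⟨Hm, cB / Q.det, div_ne_zero hcBne hQdet, hrankH, ?_⟩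
  intro s
  rw [div_mul_eq_mul_div, eq_div_iff hQdet]
  exact key s
end
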